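/- Let X₁, X₂, … be an i.i.d. sequence of real random variables with continuous distribution function F. For each n, define the normalized sequential rank ρ_n = (1/n)·∑_{i=1}^n 1{X_i ≤ X_n}. Then for every N, the random variables ρ_1, …, ρ_N are independent and ρ_n is uniformly distributed on {1/n, 2/n, …, n/n}. -/

import Mathlib

open MeasureTheory ProbabilityTheory

/-- The normalized sequential rank of `X n` among `X 0, …, X n`
(so `n + 1` observations have been seen). -/
noncomputable def seqRank (X : ℕ → Ω → ℝ) (n : ℕ) (ω : Ω) : ℝ :=
  (1 / (n + 1 : ℝ)) * ∑ i ∈ Finset.range (n + 1), if X i ω ≤ X n ω then (1 : ℝ) else 0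

open Finset
open scoped Classical

namespace SeqRankAux

variable {N : ℕ} {α β : Type*} [LinearOrder α] [LinearOrder β]

/-- sequential-rank count of a tuple -/
def scount (f : Fin N → α) (n : Fin N) : ℕ :=
  (Finset.univ.filter fun i => i ≤ n ∧ f i ≤ f n).card

lemma scount_pos (f : Fin N → α) (n : Fin N) : 1 ≤ scount f n := by
  have : n ∈ Finset.univ.filter fun i => i ≤ n ∧ f i ≤ f n := by simp
  exact Finset.card_pos.2 ⟨n, this⟩

lemma scount_le (f : Fin N → α) (n : Fin N) : scount f n ≤ (n : ℕ) + 1 := by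
  have h : (Finset.univ.filter fun i => i ≤ n ∧ f i ≤ f n) ⊆ Finset.Iic n := by
    intro i hi; simp at hi ⊢; exact hi.1
  simpa [scount, Fin.card_Iic] using Finset.card_le_card h

lemma scount_congr {f : Fin N → α} {g : Fin N → β}
    (h : ∀ i j, f i ≤ f j ↔ g i ≤ g j) : scount f = scount g := by
  funext n
  unfold scount
  congr 1
  apply Finset.filter_congr
  intro i _
  simp [h i n]

lemma lt_iff_card {f : Fin N → α} (hf : Function.Injective f) {i n : Fin N} (hin : i < n) :
    f i < f n ↔ (Finset.univ.filter fun j => j < n ∧ f j ≤ f i).card < scount f n := by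
  set A := Finset.univ.filter fun j => j < n ∧ f j ≤ f i with hA
  set B := Finset.univ.filter fun j => j ≤ n ∧ f j ≤ f n with hB
  have hfin : f i ≠ f n := fun h => absurd (hf h) (ne_of_lt hin)
  have hsc : scount f n = B.card := rfl
  rw [hsc]
  constructor
  · intro h
    refine Finset.card_lt_card ⟨?_, fun hsub => ?_⟩
    · intro j hj
      simp only [hA, hB, Finset.mem_filter, Finset.mem_univ, true_and] at hj ⊢
      exact ⟨hj.1.le, hj.2.trans h.le⟩
    · have hn : n ∈ B := by simp [hB]
      have := hsub hn
      simp [hA] at this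
  · intro h
    by_contra hc
    have hni : f n < f i := lt_of_le_of_ne (not_lt.1 hc) hfin.symm
    have hiA : i ∈ A := by simp [hA, hin]
    have hnB : n ∈ B := by simp [hB]
    have hsub : B.erase n ⊆ A.erase i := by
      intro j hj
      simp only [Finset.mem_erase, hA, hB, Finset.mem_filter, Finset.mem_univ, true_and] at hj ⊢
      have hji : f j ≤ f i := hj.2.2.trans hni.le
      refine ⟨fun hj' => ?_, lt_of_le_of_ne hj.2.1 hj.1, hji⟩
      · subst hj'
        exact absurd hj.2.2 (not_le.2 hni)
    have : B.card ≤ A.card := by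
      have h1 : (B.erase n).card + 1 = B.card := Finset.card_erase_add_one hnB
      have h2 : (A.erase i).card + 1 = A.card := Finset.card_erase_add_one hiA
      have h3 : (B.erase n).card ≤ (A.erase i).card := Finset.card_le_card hsub
      omega
    omega

lemma scount_inj {f : Fin N → α} {g : Fin N → β}
    (hf : Function.Injective f) (hg : Function.Injective g)
    (h : ∀ n, scount f n = scount g n) : ∀ i j, f i < f j ↔ g i < g j := by
  suffices H : ∀ m, ∀ i j : Fin N, (i : ℕ) < m → (j : ℕ) < m → (f i < f j ↔ g i < g j) by
    exact fun i j => H N i j i.isLt j.isLt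
  intro m
  induction m with
  | zero => intro i j hi _; omega
  | succ m ih =>
    have key : ∀ i j : Fin N, (i : ℕ) < m + 1 → (j : ℕ) < m + 1 → i < j →
        (f i < f j ↔ g i < g j) := by
      intro i j hi hj hij
      rcases Nat.lt_or_ge (j : ℕ) m with hjm | hjm
      · exact ih i j (lt_trans (Fin.lt_iff_val_lt_val.1 hij) hjm) hjm
      · have hjm' : (j : ℕ) = m := by omega
        have him : (i : ℕ) < m := by
          have := Fin.lt_iff_val_lt_val.1 hij; omega
        rw [lt_iff_card hf hij, lt_iff_card hg hij, h j]
        have hfilter : (Finset.univ.filter fun j' => j' < j ∧ f j' ≤ f i) =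
            (Finset.univ.filter fun j' => j' < j ∧ g j' ≤ g i) := by
          apply Finset.filter_congr
          intro j' _
          first
          | rw [eq_iff_iff]
          | skip
          constructor <;> rintro ⟨hj', hle⟩ <;> refine ⟨hj', ?_⟩
          · have hj'm : (j' : ℕ) < m := by have := Fin.lt_iff_val_lt_val.1 hj'; omega
            rcases eq_or_lt_of_le hle with he | hl
            · rw [hf he]
            · exact (le_of_lt ((ih j' i hj'm him).1 hl))
          · have hj'm : (j' : ℕ) < m := by have := Fin.lt_iff_val_lt_val.1 hj'; omega
            rcases eq_or_lt_of_le hle with he | hl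
            · rw [hg he]
            · exact (le_of_lt ((ih j' i hj'm him).2 hl))
        rw [hfilter]
    intro i j hi hj
    rcases lt_trichotomy i j with hij | hij | hij
    · exact key i j hi hj hij
    · subst hij
      constructor <;> intro h' <;> exact absurd h' (lt_irrefl _)
    · have h1 := key j i hj hi hij
      have hfne : f i ≠ f j := fun he => absurd (hf he) (ne_of_gt hij)
      have hgne : g i ≠ g j := fun he => absurd (hg he) (ne_of_gt hij)
      constructor
      · intro hlt
        rcases lt_trichotomy (g i) (g j) with h' | h' | h'
        · exact h'
        · exact absurd h' hgne
        · exact absurd (h1.2 h') (not_lt.2 hlt.le)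
      · intro hlt
        rcases lt_trichotomy (f i) (f j) with h' | h' | h'
        · exact h'
        · exact absurd h' hfne
        · exact absurd (h1.1 h') (not_lt.2 hlt.le)

lemma perm_eq_of_lt_iff {σ τ : Equiv.Perm (Fin N)}
    (h : ∀ i j, σ i < σ j ↔ τ i < τ j) : σ = τ := by
  have key : ∀ (ρ : Equiv.Perm (Fin N)) (n : Fin N),
      (Finset.univ.filter fun i => ρ i < ρ n).card = (ρ n : ℕ) := by
    intro ρ n
    have : (Finset.univ.filter fun i => ρ i < ρ n).card
        = (Finset.univ.filter fun k => k < ρ n).card := by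
      apply Finset.card_bij (fun i _ => ρ i)
      · intro a ha; simp at ha ⊢; exact ha
      · intro a ha b hb hab; exact ρ.injective hab
      · intro k hk
        refine ⟨ρ.symm k, ?_, by simp⟩
        simp at hk ⊢
        simpa using hk
    rw [this]
    have : (Finset.univ.filter fun k => k < ρ n) = Finset.Iio (ρ n) := by
      ext k; simp
    rw [this, Fin.card_Iio]
  apply Equiv.ext
  intro n
  have h1 : (Finset.univ.filter fun i => σ i < σ n) = (Finset.univ.filter fun i => τ i < τ n) := by
    apply Finset.filter_congr; intro i _; simp [h i n]
  have := key σ n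
  rw [h1, key τ n] at this
  exact Fin.val_injective this.symm

lemma scount_perm_inj {σ τ : Equiv.Perm (Fin N)}
    (h : ∀ n, scount (⇑σ) n = scount (⇑τ) n) : σ = τ :=
  perm_eq_of_lt_iff (scount_inj σ.injective τ.injective h)

/-- the code map into the product of Fin (n+1) -/
noncomputable def codeMap (σ : Equiv.Perm (Fin N)) : ∀ n : Fin N, Fin ((n : ℕ) + 1) :=
  fun n => ⟨scount (⇑σ) n - 1, by have := scount_le (⇑σ) n; have := scount_pos (⇑σ) n; omega⟩

lemma codeMap_bijective : Function.Bijective (codeMap (N := N)) := by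
  rw [Fintype.bijective_iff_injective_and_card]
  constructor
  · intro σ τ h
    apply scount_perm_inj
    intro n
    have h1 := congrFun h n
    have h2 : scount (⇑σ) n - 1 = scount (⇑τ) n - 1 := congrArg Fin.val h1
    have := scount_pos (⇑σ) n
    have := scount_pos (⇑τ) n
    omega
  · rw [Fintype.card_perm, Fintype.card_pi]
    simp only [Fintype.card_fin, Fintype.card_fin]
    rw [Fin.prod_univ_eq_prod_range (fun i => i + 1) N]
    exact (Finset.prod_range_add_one_eq_factorial N).symm

/-- existence of a permutation with given valid sequential code -/
lemma exists_perm_code (k : Fin N → ℕ) (hk : ∀ n, 1 ≤ k n ∧ k n ≤ (n : ℕ) + 1) :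
    ∃ σ : Equiv.Perm (Fin N), ∀ n, scount (⇑σ) n = k n := by
  obtain ⟨σ, hσ⟩ := codeMap_bijective.2 (fun n => ⟨k n - 1, by have := hk n; omega⟩)
  refine ⟨σ, fun n => ?_⟩
  have h1 : scount (⇑σ) n - 1 = k n - 1 := congrArg Fin.val (congrFun hσ n)
  have := scount_pos (⇑σ) n
  have := hk n
  omega

/-- The event that the tuple `x` has the same relative order as `σ`. -/
def Eperm (σ : Equiv.Perm (Fin N)) : Set (Fin N → ℝ) :=
  {x | ∀ i j, σ i < σ j → x i < x j}

lemma measurableSet_Eperm (σ : Equiv.Perm (Fin N)) : MeasurableSet (Eperm σ) := by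
  have : Eperm σ = ⋂ (i : Fin N), ⋂ (j : Fin N), ⋂ (_ : σ i < σ j), {x : Fin N → ℝ | x i < x j} := by
    ext x; simp [Eperm]
  rw [this]
  exact MeasurableSet.iInter fun i => MeasurableSet.iInter fun j => MeasurableSet.iInter fun _ =>
    measurableSet_lt (measurable_pi_apply i) (measurable_pi_apply j)

lemma injective_of_mem_Eperm {σ : Equiv.Perm (Fin N)} {x : Fin N → ℝ} (hx : x ∈ Eperm σ) :
    Function.Injective x := by
  intro i j hij
  by_contra hne
  rcases lt_trichotomy (σ i) (σ j) with h | h | h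
  · exact absurd hij (ne_of_lt (hx i j h))
  · exact hne (σ.injective h)
  · exact absurd hij.symm (ne_of_lt (hx j i h))

lemma le_iff_of_mem_Eperm {σ : Equiv.Perm (Fin N)} {x : Fin N → ℝ} (hx : x ∈ Eperm σ)
    (i j : Fin N) : x i ≤ x j ↔ σ i ≤ σ j := by
  constructor
  · intro h
    by_contra hc
    exact absurd (hx j i (not_le.1 hc)) (not_lt.2 h)
  · intro h
    rcases eq_or_lt_of_le h with he | hl
    · rw [σ.injective he]
    · exact (hx i j hl).le

lemma scount_of_mem_Eperm {σ : Equiv.Perm (Fin N)} {x : Fin N → ℝ} (hx : x ∈ Eperm σ) :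
    scount x = scount (⇑σ) :=
  scount_congr fun i j => le_iff_of_mem_Eperm hx i j

lemma Eperm_disjoint {σ τ : Equiv.Perm (Fin N)} (h : σ ≠ τ) :
    Disjoint (Eperm σ) (Eperm τ) := by
  rw [Set.disjoint_left]
  intro x hxσ hxτ
  refine h (perm_eq_of_lt_iff fun i j => ?_)
  have hinj := injective_of_mem_Eperm hxσ
  constructor
  · intro hl
    have hxlt := hxσ i j hl
    by_contra hc
    have : i ≠ j := fun he => absurd (he ▸ hxlt) (lt_irrefl _)
    rcases lt_trichotomy (τ i) (τ j) with h' | h' | h'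
    · exact hc h'
    · exact this (τ.injective h')
    · exact absurd (hxτ j i h') (not_lt.2 hxlt.le)
  · intro hl
    have hxlt := hxτ i j hl
    by_contra hc
    have : i ≠ j := fun he => absurd (he ▸ hxlt) (lt_irrefl _)
    rcases lt_trichotomy (σ i) (σ j) with h' | h' | h'
    · exact hc h'
    · exact this (σ.injective h')
    · exact absurd (hxσ j i h') (not_lt.2 hxlt.le)

lemma exists_mem_Eperm {x : Fin N → ℝ} (hx : Function.Injective x) :
    ∃ σ : Equiv.Perm (Fin N), x ∈ Eperm σ := by
  have hm : StrictMono (x ∘ Tuple.sort x) :=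
    (Tuple.monotone_sort x).strictMono_of_injective (hx.comp (Tuple.sort x).injective)
  refine ⟨(Tuple.sort x)⁻¹, fun i j hlt => ?_⟩
  have hi : x i = (x ∘ Tuple.sort x) ((Tuple.sort x)⁻¹ i) := by
    simp [Function.comp]
  have hj : x j = (x ∘ Tuple.sort x) ((Tuple.sort x)⁻¹ j) := by
    simp [Function.comp]
  rw [hi, hj]
  exact hm hlt

lemma iUnion_Eperm : (⋃ σ : Equiv.Perm (Fin N), Eperm σ) = {x | Function.Injective x} := by
  ext x
  simp only [Set.mem_iUnion, Set.mem_setOf_eq]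
  exact ⟨fun ⟨σ, hσ⟩ => injective_of_mem_Eperm hσ, exists_mem_Eperm⟩

lemma Eperm_eq_preimage (σ : Equiv.Perm (Fin N)) :
    Eperm σ = (fun x : Fin N → ℝ => x ∘ ⇑σ.symm) ⁻¹' (Eperm (1 : Equiv.Perm (Fin N))) := by
  ext x
  simp only [Set.mem_preimage, Eperm, Set.mem_setOf_eq, Equiv.Perm.coe_one, id_eq]
  constructor
  · intro hx a b hab
    exact hx _ _ (by simpa using hab)
  · intro hx i j hij
    have := hx (σ i) (σ j) hij
    simpa using this

variable (μ : Measure ℝ) [IsProbabilityMeasure μ]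

lemma measurePreserving_comp_perm (σ : Equiv.Perm (Fin N)) :
    MeasurePreserving (fun x : Fin N → ℝ => x ∘ ⇑σ)
      (Measure.pi fun _ => μ) (Measure.pi fun _ => μ) := by
  have h := measurePreserving_piCongrLeft (fun _ : Fin N => μ) σ.symm
  have heq : ⇑(MeasurableEquiv.piCongrLeft (fun _ : Fin N => ℝ) σ.symm)
      = fun x : Fin N → ℝ => x ∘ ⇑σ := by
    funext x
    funext i
    rw [MeasurableEquiv.coe_piCongrLeft]
    have h2 := Equiv.piCongrLeft_apply_apply (fun _ : Fin N => ℝ) σ.symm x (σ.symm.symm i)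
    rw [Equiv.apply_symm_apply] at h2
    simpa using h2
  rw [heq] at h
  exact h

lemma nu_Eperm_eq (σ : Equiv.Perm (Fin N)) :
    Measure.pi (fun _ : Fin N => μ) (Eperm σ)
      = Measure.pi (fun _ : Fin N => μ) (Eperm (1 : Equiv.Perm (Fin N))) := by
  rw [Eperm_eq_preimage]
  exact (measurePreserving_comp_perm μ σ.symm).measure_preimage
    (measurableSet_Eperm 1).nullMeasurableSet

lemma nu_Eperm (hT : Measure.pi (fun _ : Fin N => μ) {x | ¬ Function.Injective x} = 0)
    (σ : Equiv.Perm (Fin N)) :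
    Measure.pi (fun _ : Fin N => μ) (Eperm σ) = ((N.factorial : ENNReal))⁻¹ := by
  set ν := Measure.pi (fun _ : Fin N => μ) with hν
  have hsum : ∑ τ ∈ (Finset.univ : Finset (Equiv.Perm (Fin N))), ν (Eperm τ) = 1 := by
    rw [← measure_biUnion_finset]
    · have h1 : (⋃ τ ∈ (Finset.univ : Finset (Equiv.Perm (Fin N))), Eperm τ)
          = {x : Fin N → ℝ | Function.Injective x} := by
        simpa using iUnion_Eperm (N := N)
      rw [h1]
      have hco : {x : Fin N → ℝ | Function.Injective x}
          = {x : Fin N → ℝ | ¬ Function.Injective x}ᶜ := by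
        ext x; simp
      rw [hco, prob_compl_eq_one_iff₀ (MeasureTheory.NullMeasurableSet.of_null hT)]
      exact hT
    · intro a _ b _ hab
      exact Eperm_disjoint hab
    · intro τ _
      exact measurableSet_Eperm τ
  have hall : ∀ τ : Equiv.Perm (Fin N), ν (Eperm τ) = ν (Eperm 1) := fun τ => nu_Eperm_eq μ τ
  rw [Finset.sum_congr rfl (fun τ _ => hall τ), Finset.sum_const, Finset.card_univ,
    Fintype.card_perm, Fintype.card_fin, nsmul_eq_mul] at hsum
  have hfac0 : ((N.factorial : ENNReal)) ≠ 0 := by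
    exact_mod_cast Nat.cast_ne_zero.2 (Nat.factorial_ne_zero N)
  have hfact : ((N.factorial : ENNReal)) ≠ ⊤ := ENNReal.natCast_ne_top _
  calc ν (Eperm σ) = ν (Eperm 1) := hall σ
    _ = (N.factorial : ENNReal)⁻¹ * ((N.factorial : ENNReal) * ν (Eperm 1)) := by
        rw [← mul_assoc, ENNReal.inv_mul_cancel hfac0 hfact, one_mul]
    _ = (N.factorial : ENNReal)⁻¹ := by rw [hsum, mul_one]


lemma measurable_scount (n : Fin N) : Measurable fun x : Fin N → ℝ => scount x n := by
  have : (fun x : Fin N → ℝ => scount x n)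
      = fun x => ∑ i : Fin N, if i ≤ n ∧ x i ≤ x n then 1 else 0 := by
    funext x
    rw [scount, Finset.card_filter]
  rw [this]
  apply Finset.measurable_sum
  intro i _
  have hset : MeasurableSet {x : Fin N → ℝ | i ≤ n ∧ x i ≤ x n} := by
    by_cases h : i ≤ n
    · simp only [h, true_and]
      exact measurableSet_le (measurable_pi_apply i) (measurable_pi_apply n)
    · simp only [h, false_and]
      exact MeasurableSet.empty
  exact Measurable.ite hset measurable_const measurable_const

lemma measurableSet_scount_mem (T : Fin N → Finset ℕ) :
    MeasurableSet {x : Fin N → ℝ | ∀ n, scount x n ∈ T n} := by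
  have : {x : Fin N → ℝ | ∀ n, scount x n ∈ T n}
      = ⋂ n : Fin N, (fun x : Fin N → ℝ => scount x n) ⁻¹' {m | m ∈ T n} := by
    ext x; simp
  rw [this]
  exact MeasurableSet.iInter fun n =>
    (measurable_scount n) (MeasurableSet.of_discrete)

lemma nu_full (μ : Measure ℝ) [IsProbabilityMeasure μ]
    (hT : Measure.pi (fun _ : Fin N => μ) {x | ¬ Function.Injective x} = 0)
    (k : Fin N → ℕ) (hk : ∀ n, 1 ≤ k n ∧ k n ≤ (n : ℕ) + 1) :
    Measure.pi (fun _ : Fin N => μ) {x | ∀ n, scount x n = k n}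
      = ((N.factorial : ENNReal))⁻¹ := by
  set ν := Measure.pi (fun _ : Fin N => μ) with hν
  obtain ⟨σ, hσ⟩ := exists_perm_code k hk
  have hsub1 : Eperm σ ⊆ {x | ∀ n, scount x n = k n} := by
    intro x hx n
    rw [congrFun (scount_of_mem_Eperm hx) n, hσ n]
  have hsub2 : {x | ∀ n, scount x n = k n} ⊆ Eperm σ ∪ {x | ¬ Function.Injective x} := by
    intro x hx
    by_cases hinj : Function.Injective x
    · obtain ⟨τ, hτ⟩ := exists_mem_Eperm hinj
      left
      have : τ = σ := by
        apply scount_perm_inj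
        intro n
        rw [← congrFun (scount_of_mem_Eperm hτ) n, hx n, ← hσ n]
      rwa [← this]
    · right; exact hinj
  have h1 : ν {x | ∀ n, scount x n = k n} ≤ ν (Eperm σ) := by
    calc ν {x | ∀ n, scount x n = k n} ≤ ν (Eperm σ ∪ {x | ¬ Function.Injective x}) :=
          measure_mono hsub2
      _ ≤ ν (Eperm σ) + ν {x | ¬ Function.Injective x} := measure_union_le _ _
      _ = ν (Eperm σ) := by rw [hT, add_zero]
  have h2 : ν (Eperm σ) ≤ ν {x | ∀ n, scount x n = k n} := measure_mono hsub1
  rw [le_antisymm h1 h2]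
  exact nu_Eperm μ hT σ

lemma nu_mem (μ : Measure ℝ) [IsProbabilityMeasure μ]
    (hT : Measure.pi (fun _ : Fin N => μ) {x | ¬ Function.Injective x} = 0)
    (T : Fin N → Finset ℕ) (hsub : ∀ n, T n ⊆ Finset.Icc 1 ((n : ℕ) + 1)) :
    Measure.pi (fun _ : Fin N => μ) {x | ∀ n, scount x n ∈ T n}
      = (∏ n : Fin N, ((T n).card : ENNReal)) * ((N.factorial : ENNReal))⁻¹ := by
  set ν := Measure.pi (fun _ : Fin N => μ) with hν
  have hdecomp : {x : Fin N → ℝ | ∀ n, scount x n ∈ T n}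
      = ⋃ j ∈ Fintype.piFinset T, {x : Fin N → ℝ | ∀ n, scount x n = j n} := by
    ext x
    simp only [Set.mem_setOf_eq, Set.mem_iUnion]
    constructor
    · intro hx
      refine ⟨fun n => scount x n, ?_, fun n => rfl⟩
      rw [Fintype.mem_piFinset]
      exact hx
    · rintro ⟨j, hj, hx⟩ n
      rw [hx n]
      exact (Fintype.mem_piFinset.1 hj) n
  rw [hdecomp, measure_biUnion_finset]
  · have heach : ∀ j ∈ Fintype.piFinset T,
        ν {x : Fin N → ℝ | ∀ n, scount x n = j n} = ((N.factorial : ENNReal))⁻¹ := by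
      intro j hj
      apply nu_full μ hT
      intro n
      have := hsub n (Fintype.mem_piFinset.1 hj n)
      simp only [Finset.mem_Icc] at this
      exact this
    rw [Finset.sum_congr rfl heach, Finset.sum_const, nsmul_eq_mul]
    congr 1
    rw [Fintype.card_piFinset]
    push_cast
    rfl
  · intro a ha b hb hab
    rw [Function.onFun, Set.disjoint_left]
    intro x hxa hxb
    apply hab
    funext n
    rw [← hxa n, ← hxb n]
  · intro j _
    have : {x : Fin N → ℝ | ∀ n, scount x n = j n}
        = {x : Fin N → ℝ | ∀ n, scount x n ∈ ({j n} : Finset ℕ)} := by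
      ext x; simp
    rw [this]
    exact measurableSet_scount_mem _


/-- integer sequential rank count -/
noncomputable def cnt (X : ℕ → Ω' → ℝ) (n : ℕ) (ω : Ω') : ℕ :=
  ((Finset.range (n + 1)).filter fun i => X i ω ≤ X n ω).card

lemma cnt_eq_scount {Ω : Type*} (X : ℕ → Ω → ℝ) {n : ℕ} (hn : n < N) (ω : Ω) :
    cnt X n ω = scount (fun i : Fin N => X i ω) ⟨n, hn⟩ := by
  unfold cnt scount
  apply Finset.card_bij (fun (i : ℕ) (hi : i ∈ (Finset.range (n + 1)).filter
    fun i => X i ω ≤ X n ω) => (⟨i, by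
      simp only [Finset.mem_filter, Finset.mem_range] at hi
      omega⟩ : Fin N))
  · intro a ha
    simp only [Finset.mem_filter, Finset.mem_range] at ha
    simp only [Finset.mem_filter, Finset.mem_univ, true_and]
    exact ⟨by simp [Fin.le_def]; omega, ha.2⟩
  · intro a ha b hb hab
    simpa [Fin.mk.injEq] using congrArg Fin.val hab
  · intro b hb
    simp only [Finset.mem_filter, Finset.mem_univ, true_and, Fin.le_def] at hb
    refine ⟨(b : ℕ), ?_, by simp⟩
    simp only [Finset.mem_filter, Finset.mem_range]
    exact ⟨by omega, hb.2⟩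

lemma cnt_mem_Icc {Ω : Type*} (X : ℕ → Ω → ℝ) (n : ℕ) (ω : Ω) : cnt X n ω ∈ Finset.Icc 1 (n + 1) := by
  rw [Finset.mem_Icc, cnt_eq_scount X (Nat.lt_succ_self n) ω]
  refine ⟨scount_pos _ _, ?_⟩
  simpa using scount_le (fun i : Fin (n + 1) => X i ω) ⟨n, Nat.lt_succ_self n⟩

section Glue
variable {Ω : Type*} [MeasurableSpace Ω] (P : Measure Ω)
    [IsProbabilityMeasure P] (X : ℕ → Ω → ℝ)

lemma measurable_cnt (hmeas : ∀ n, Measurable (X n)) (n : ℕ) : Measurable (cnt X n) := by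
  have : cnt X n = fun ω => ∑ i ∈ Finset.range (n + 1), if X i ω ≤ X n ω then 1 else 0 := by
    funext ω
    rw [cnt, Finset.card_filter]
  rw [this]
  apply Finset.measurable_sum
  intro i _
  exact Measurable.ite (measurableSet_le (hmeas i) (hmeas n)) measurable_const measurable_const

/-- the joint law of the first `N` variables is the product measure -/
lemma map_Y (hmeas : ∀ n, Measurable (X n))
    (hindep : iIndepFun X P)
    (hident : ∀ n, Measure.map (X n) P = Measure.map (X 0) P) :
    Measure.map (fun ω (i : Fin N) => X i ω) P
      = Measure.pi (fun _ : Fin N => Measure.map (X 0) P) := by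
  have hY : Measurable (fun ω (i : Fin N) => X i ω) :=
    measurable_pi_lambda _ fun i => hmeas i
  refine (Measure.pi_eq fun s hs => ?_).symm
  rw [Measure.map_apply hY (MeasurableSet.univ_pi hs)]
  set s' : ℕ → Set ℝ := fun m => if h : m < N then s ⟨m, h⟩ else Set.univ with hs'
  have hpre : (fun ω (i : Fin N) => X i ω) ⁻¹' Set.pi Set.univ s
      = ⋂ m ∈ Finset.range N, X m ⁻¹' s' m := by
    ext ω
    simp only [Set.mem_preimage, Set.mem_pi, Set.mem_univ, true_implies, Set.mem_iInter,
      Finset.mem_range]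
    constructor
    · intro h m hm
      simp only [hs', hm, dif_pos]
      exact h ⟨m, hm⟩
    · intro h i
      have := h i i.isLt
      simpa only [hs', i.isLt, dif_pos] using this
  rw [hpre, hindep.measure_inter_preimage_eq_mul (Finset.range N) (sets := s')
    (fun m hm => ?_)]
  · have heach : ∀ m ∈ Finset.range N, P (X m ⁻¹' s' m) = Measure.map (X 0) P (s' m) := by
      intro m hm
      rw [Finset.mem_range] at hm
      rw [← hident m, Measure.map_apply (hmeas m)]
      simp only [hs', hm, dif_pos]
      exact hs _
    rw [Finset.prod_congr rfl heach,
      ← Fin.prod_univ_eq_prod_range (fun m => Measure.map (X 0) P (s' m)) N]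
    apply Finset.prod_congr rfl
    intro i _
    congr 1
    simp [hs', i.isLt]
  · rw [Finset.mem_range] at hm
    simp only [hs', hm, dif_pos]
    exact hs _

lemma ties_null (hmeas : ∀ n, Measurable (X n))
    (hindep : iIndepFun X P)
    (hident : ∀ n, Measure.map (X n) P = Measure.map (X 0) P)
    (hcont : ∀ x : ℝ, Measure.map (X 0) P {x} = 0) {a b : ℕ} (hab : a ≠ b) : P {ω | X a ω = X b ω} = 0 := by
  have hi : IndepFun (X a) (X b) P := hindep.indepFun hab
  have hmap := (indepFun_iff_map_prod_eq_prod_map_map (hmeas a).aemeasurable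
    (hmeas b).aemeasurable).1 hi
  have hdiag : MeasurableSet {p : ℝ × ℝ | p.1 = p.2} :=
    measurableSet_eq_fun measurable_fst measurable_snd
  have : {ω | X a ω = X b ω} = (fun ω => (X a ω, X b ω)) ⁻¹' {p : ℝ × ℝ | p.1 = p.2} := rfl
  rw [this, ← Measure.map_apply ((hmeas a).prodMk (hmeas b)) hdiag, hmap,
    Measure.prod_apply hdiag]
  have : ∀ x : ℝ, (Measure.map (X b) P) (Prod.mk x ⁻¹' {p : ℝ × ℝ | p.1 = p.2}) = 0 := by
    intro x
    have : (Prod.mk x ⁻¹' {p : ℝ × ℝ | p.1 = p.2}) = {x} := by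
      ext y; simp [eq_comm]
    rw [this, hident b]
    exact hcont x
  simp only [this]
  simp

lemma measurableSet_notInj :
    MeasurableSet {x : Fin N → ℝ | ¬ Function.Injective x} := by
  have : {x : Fin N → ℝ | ¬ Function.Injective x}
      = ⋃ (i : Fin N), ⋃ (j : Fin N), ⋃ (_ : i ≠ j), {x : Fin N → ℝ | x i = x j} := by
    ext x
    simp only [Set.mem_setOf_eq, Set.mem_iUnion, Function.Injective]
    push_neg
    constructor
    · rintro ⟨i, j, h1, h2⟩; exact ⟨i, j, h2, h1⟩
    · rintro ⟨i, j, h2, h1⟩; exact ⟨i, j, h1, h2⟩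
  rw [this]
  exact MeasurableSet.iUnion fun i => MeasurableSet.iUnion fun j => MeasurableSet.iUnion fun _ =>
    measurableSet_eq_fun (measurable_pi_apply i) (measurable_pi_apply j)

lemma nu_T_zero (hmeas : ∀ n, Measurable (X n))
    (hindep : iIndepFun X P)
    (hident : ∀ n, Measure.map (X n) P = Measure.map (X 0) P)
    (hcont : ∀ x : ℝ, Measure.map (X 0) P {x} = 0) :
    Measure.pi (fun _ : Fin N => Measure.map (X 0) P) {x | ¬ Function.Injective x} = 0 := by
  have hY : Measurable (fun ω (i : Fin N) => X i ω) :=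
    measurable_pi_lambda _ fun i => hmeas i
  rw [← map_Y P X hmeas hindep hident,
    Measure.map_apply hY measurableSet_notInj]
  have hsub : (fun ω (i : Fin N) => X i ω) ⁻¹' {x : Fin N → ℝ | ¬ Function.Injective x}
      ⊆ ⋃ (i : Fin N), ⋃ (j : Fin N), ⋃ (_ : i ≠ j), {ω | X (i : ℕ) ω = X (j : ℕ) ω} := by
    intro ω hω
    simp only [Set.mem_preimage, Set.mem_setOf_eq, Function.Injective] at hω
    push_neg at hω
    obtain ⟨i, j, h1, h2⟩ := hω
    simp only [Set.mem_iUnion]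
    exact ⟨i, j, h2, h1⟩
  refine measure_mono_null hsub ?_
  refine measure_iUnion_null fun i => measure_iUnion_null fun j => measure_iUnion_null fun hij =>
    ties_null P X hmeas hindep hident hcont ?_
  exact fun h => hij (Fin.val_injective h)

/-- Master lemma at the level of `Ω`. -/
lemma P_mem (hmeas : ∀ n, Measurable (X n))
    (hindep : iIndepFun X P)
    (hident : ∀ n, Measure.map (X n) P = Measure.map (X 0) P)
    (hcont : ∀ x : ℝ, Measure.map (X 0) P {x} = 0) (s : Finset ℕ) (K : ℕ → Finset ℕ) (hK : ∀ n ∈ s, K n ⊆ Finset.Icc 1 (n + 1)) :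
    P (⋂ n ∈ s, {ω | cnt X n ω ∈ K n})
      = ∏ n ∈ s, ((K n).card : ENNReal) * (((n : ENNReal) + 1))⁻¹ := by
  classical
  set N := (s.sup id) + 1 with hN
  have hsN : ∀ n ∈ s, n < N := fun n hn =>
    Nat.lt_succ_of_le (Finset.le_sup (f := id) hn)
  set μ := Measure.map (X 0) P with hμ
  have : IsProbabilityMeasure μ := Measure.isProbabilityMeasure_map (hmeas 0).aemeasurable
  set T : Fin N → Finset ℕ := fun n => if (n : ℕ) ∈ s then K n else Finset.Icc 1 ((n : ℕ) + 1)
    with hT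
  have hTsub : ∀ n : Fin N, T n ⊆ Finset.Icc 1 ((n : ℕ) + 1) := by
    intro n
    simp only [hT]
    split
    · exact hK _ (by assumption)
    · exact Finset.Subset.refl _
  have hY : Measurable (fun ω (i : Fin N) => X i ω) :=
    measurable_pi_lambda _ fun i => hmeas i
  have hpre : (⋂ n ∈ s, {ω | cnt X n ω ∈ K n})
      = (fun ω (i : Fin N) => X i ω) ⁻¹' {x | ∀ n : Fin N, scount x n ∈ T n} := by
    ext ω
    simp only [Set.mem_iInter, Set.mem_setOf_eq, Set.mem_preimage]
    constructor
    · intro h n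
      by_cases hn : (n : ℕ) ∈ s
      · have := h (n : ℕ) hn
        rw [cnt_eq_scount X n.isLt ω] at this
        simpa [hT, hn] using this
      · simp only [hT, hn, if_false, Finset.mem_Icc]
        exact ⟨scount_pos _ _, scount_le _ _⟩
    · intro h n hn
      have hnN : n < N := hsN n hn
      have := h ⟨n, hnN⟩
      rw [cnt_eq_scount X hnN ω]
      simpa [hT, hn] using this
  rw [hpre, ← Measure.map_apply hY (measurableSet_scount_mem T),
    map_Y P X hmeas hindep hident, ← hμ,
    nu_mem μ (nu_T_zero P X hmeas hindep hident hcont) T hTsub]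
  -- arithmetic
  have hfac : (N.factorial : ENNReal) = ∏ n : Fin N, ((n : ℕ) + 1 : ENNReal) := by
    have hn : (∏ n : Fin N, ((n : ℕ) + 1)) = N.factorial := by
      rw [Fin.prod_univ_eq_prod_range (fun i => i + 1) N]
      exact Finset.prod_range_add_one_eq_factorial N
    rw [← hn]
    push_cast
    rfl
  rw [hfac, ENNReal.prod_inv_distrib, ← Finset.prod_mul_distrib]
  have hpt : ∀ n : Fin N, ((T n).card : ENNReal) * ((n : ℕ) + 1 : ENNReal)⁻¹
      = if (n : ℕ) ∈ s then ((K (n : ℕ)).card : ENNReal) * (((n : ℕ) : ENNReal) + 1)⁻¹ else 1 := by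
    intro n
    simp only [hT]
    split
    · push_cast; ring_nf
    · rw [Nat.card_Icc]
      simp only [Nat.add_sub_cancel]
      have hcast : (((n : ℕ) + 1 : ℕ) : ENNReal) = ((n : ℕ) : ENNReal) + 1 := by push_cast; rfl
      rw [hcast]
      exact ENNReal.mul_inv_cancel
        (by exact_mod_cast Nat.succ_ne_zero (n : ℕ))
        (ENNReal.add_ne_top.2 ⟨ENNReal.natCast_ne_top _, ENNReal.one_ne_top⟩)
  rw [Finset.prod_congr rfl (fun n _ => hpt n),
    Fin.prod_univ_eq_prod_range
      (fun m => if m ∈ s then ((K m).card : ENNReal) * ((m : ENNReal) + 1)⁻¹ else 1) N,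
    ← Finset.prod_filter]
  have hfil : (Finset.range N).filter (fun m => m ∈ s) = s := by
    ext m
    simp only [Finset.mem_filter, Finset.mem_range]
    exact ⟨fun h => h.2, fun h => ⟨hsN m h, h⟩⟩
  rw [hfil]
  exact fun i _ j _ _ => Or.inl (by
    intro h
    rw [add_eq_zero] at h
    exact one_ne_zero h.2)


end Glue
end SeqRankAux

open SeqRankAux

lemma seqRank_eq_cnt {Ω : Type*} (X : ℕ → Ω → ℝ) (n : ℕ) (ω : Ω) :
    seqRank X n ω = (cnt X n ω : ℝ) / ((n : ℝ) + 1) := by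
  rw [seqRank, cnt, Finset.sum_boole]
  ring

lemma seqRank_preimage {Ω : Type*} (X : ℕ → Ω → ℝ) (n : ℕ) (A : Set ℝ) :
    seqRank X n ⁻¹' A
      = {ω | cnt X n ω ∈ (Finset.Icc 1 (n + 1)).filter
          fun k : ℕ => ((k : ℝ) / ((n : ℝ) + 1)) ∈ A} := by
  ext ω
  simp only [Set.mem_preimage, Set.mem_setOf_eq, Finset.mem_filter]
  rw [seqRank_eq_cnt]
  exact ⟨fun h => ⟨cnt_mem_Icc X n ω, h⟩, fun h => h.2⟩

/-- **Barndorff-Nielsen:** for an i.i.d. sequence with continuous distribution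
function, the normalized sequential ranks `ρ 0, ρ 1, …` are independent, and
`ρ n` is uniformly distributed on `{1/(n+1), …, (n+1)/(n+1)}`. -/
theorem seqRank_iIndep_uniform {Ω : Type*} [MeasurableSpace Ω] (P : Measure Ω)
    [IsProbabilityMeasure P] (X : ℕ → Ω → ℝ) (hmeas : ∀ n, Measurable (X n))
    (hindep : iIndepFun X P)
    (hident : ∀ n, Measure.map (X n) P = Measure.map (X 0) P)
    (hcont : ∀ x : ℝ, Measure.map (X 0) P {x} = 0) :
    iIndepFun (seqRank X) P ∧
    ∀ n : ℕ, ∀ k : ℕ, 1 ≤ k → k ≤ n + 1 →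
      P {ω | seqRank X n ω = (k : ℝ) / (n + 1 : ℝ)} = (1 : ENNReal) / (n + 1) := by
  constructor
  · rw [iIndepFun_iff_measure_inter_preimage_eq_mul]
    intro S sets hsets
    have hpre : ∀ n, seqRank X n ⁻¹' sets n
        = {ω | cnt X n ω ∈ (Finset.Icc 1 (n + 1)).filter
            fun k : ℕ => ((k : ℝ) / ((n : ℝ) + 1)) ∈ sets n} :=
      fun n => seqRank_preimage X n (sets n)
    have hL : (⋂ n ∈ S, seqRank X n ⁻¹' sets n)
        = ⋂ n ∈ S, {ω | cnt X n ω ∈ (Finset.Icc 1 (n + 1)).filter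
            fun k : ℕ => ((k : ℝ) / ((n : ℝ) + 1)) ∈ sets n} := by
      apply Set.iInter₂_congr
      intro n _
      exact hpre n
    rw [hL, P_mem P X hmeas hindep hident hcont S _ (fun n _ => Finset.filter_subset _ _)]
    apply Finset.prod_congr rfl
    intro n _
    rw [hpre n]
    have hsingle := P_mem P X hmeas hindep hident hcont {n}
      (fun m => (Finset.Icc 1 (m + 1)).filter fun k : ℕ => ((k : ℝ) / ((m : ℝ) + 1)) ∈ sets m)
      (fun m _ => Finset.filter_subset _ _)
    simpa using hsingle.symm
  · intro n k hk1 hk2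
    have hset : {ω | seqRank X n ω = (k : ℝ) / (n + 1 : ℝ)}
        = ⋂ m ∈ ({n} : Finset ℕ), {ω | cnt X m ω ∈ ({k} : Finset ℕ)} := by
      ext ω
      simp only [Set.mem_setOf_eq, Finset.mem_singleton, Set.mem_iInter, Finset.mem_singleton,
        Set.mem_setOf_eq]
      rw [seqRank_eq_cnt]
      have hne : ((n : ℝ) + 1) ≠ 0 := by positivity
      constructor
      · intro h
        intro m hm
        subst hm
        have := (div_left_inj' hne).1 h
        exact_mod_cast this
      · intro h
        have := h n rfl
        rw [this]
    rw [hset, P_mem P X hmeas hindep hident hcont {n} (fun _ => ({k} : Finset ℕ))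
      (fun m hm => by
        rw [Finset.mem_singleton] at hm
        subst hm
        intro x hx
        rw [Finset.mem_singleton] at hx
        subst hx
        rw [Finset.mem_Icc]
        exact ⟨hk1, hk2⟩)]
    simp [one_div]
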